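/- For all positive integers n, m, r with n ≥ m·r + 1, we have S(n, m, ≥r) ≤ (m^(m·r+1) / m!) · S(n−1, m, ≥r). -/
import Mathlib


/-- The `r`-associated Stirling number: the number of partitions of `{1,...,n}`
(modelled as `Fin n`) into exactly `m` blocks, each of size at least `r`. -/
noncomputable def stirlingGe (n m r : ℕ) : ℕ :=
  Set.ncard {P : Finset (Finset (Fin n)) |
    P.card = m ∧ (∀ b ∈ P, r ≤ b.card) ∧ ∀ x : Fin n, ∃! b, b ∈ P ∧ x ∈ b}

namespace StirlingGeAux

variable {n m r : ℕ}

/-- The block of a partition containing a given point. -/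
noncomputable def blockOf (P : Finset (Finset (Fin n)))
    (hP : ∀ x : Fin n, ∃! b, b ∈ P ∧ x ∈ b) (x : Fin n) : Finset (Fin n) :=
  Finset.choose (fun b => x ∈ b) P (hP x)

lemma blockOf_mem (P : Finset (Finset (Fin n)))
    (hP : ∀ x : Fin n, ∃! b, b ∈ P ∧ x ∈ b) (x : Fin n) : blockOf P hP x ∈ P :=
  Finset.choose_mem _ _ _

lemma mem_blockOf (P : Finset (Finset (Fin n)))
    (hP : ∀ x : Fin n, ∃! b, b ∈ P ∧ x ∈ b) (x : Fin n) : x ∈ blockOf P hP x :=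
  Finset.choose_property (fun b => x ∈ b) P (hP x)

lemma blockOf_eq (P : Finset (Finset (Fin n)))
    (hP : ∀ x : Fin n, ∃! b, b ∈ P ∧ x ∈ b) {x : Fin n} {b : Finset (Fin n)}
    (hb : b ∈ P) (hx : x ∈ b) : blockOf P hP x = b :=
  (hP x).unique ⟨blockOf_mem P hP x, mem_blockOf P hP x⟩ ⟨hb, hx⟩

/-- Encode a partition with `m` blocks together with a permutation as a function
`Fin n → Fin m`. -/
noncomputable def encode (P : Finset (Finset (Fin n))) (hc : P.card = m)
    (hP : ∀ x : Fin n, ∃! b, b ∈ P ∧ x ∈ b) (σ : Equiv.Perm (Fin m)) :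
    Fin n → Fin m :=
  fun x => σ (Finset.equivFinOfCardEq hc ⟨blockOf P hP x, blockOf_mem P hP x⟩)

lemma encode_eq_iff (P : Finset (Finset (Fin n))) (hc : P.card = m)
    (hP : ∀ x : Fin n, ∃! b, b ∈ P ∧ x ∈ b) (σ : Equiv.Perm (Fin m)) (x y : Fin n) :
    encode P hc hP σ x = encode P hc hP σ y ↔ blockOf P hP x = blockOf P hP y := by
  unfold encode
  rw [σ.injective.eq_iff, (Finset.equivFinOfCardEq hc).injective.eq_iff,
    Subtype.mk.injEq]

lemma blockOf_eq_filter (P : Finset (Finset (Fin n))) (hc : P.card = m)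
    (hP : ∀ x : Fin n, ∃! b, b ∈ P ∧ x ∈ b) (σ : Equiv.Perm (Fin m)) (x : Fin n) :
    blockOf P hP x =
      Finset.univ.filter (fun y => encode P hc hP σ y = encode P hc hP σ x) := by
  ext y
  simp only [Finset.mem_filter, Finset.mem_univ, true_and, encode_eq_iff]
  constructor
  · intro hy
    exact blockOf_eq P hP (blockOf_mem P hP x) hy
  · intro hy
    rw [← hy]
    exact mem_blockOf P hP y

lemma P_eq_image (P : Finset (Finset (Fin n)))
    (hP : ∀ x : Fin n, ∃! b, b ∈ P ∧ x ∈ b) (hr : 0 < r)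
    (hcard : ∀ b ∈ P, r ≤ b.card) :
    P = Finset.univ.image (fun x => blockOf P hP x) := by
  ext b
  simp only [Finset.mem_image, Finset.mem_univ, true_and]
  constructor
  · intro hb
    obtain ⟨x, hx⟩ := Finset.card_pos.mp (lt_of_lt_of_le hr (hcard b hb))
    exact ⟨x, blockOf_eq P hP hb hx⟩
  · rintro ⟨x, rfl⟩
    exact blockOf_mem P hP x

lemma lemA (n m r : ℕ) (hr : 0 < r) :
    stirlingGe n m r * Nat.factorial m ≤ m ^ n := by
  classical
  set S : Set (Finset (Finset (Fin n))) := {P : Finset (Finset (Fin n)) |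
    P.card = m ∧ (∀ b ∈ P, r ≤ b.card) ∧ ∀ x : Fin n, ∃! b, b ∈ P ∧ x ∈ b} with hS
  have key : Nat.card (↥S × Equiv.Perm (Fin m)) ≤ Nat.card (Fin n → Fin m) := by
    apply Nat.card_le_card_of_injective
      (fun z => encode z.1.1 z.1.2.1 z.1.2.2.2 z.2)
    rintro ⟨⟨P, hPc, hPr, hPu⟩, σ⟩ ⟨⟨Q, hQc, hQr, hQu⟩, τ⟩ hEq
    simp only at hEq
    have hPQ : P = Q := by
      rw [P_eq_image P hPu hr hPr, P_eq_image Q hQu hr hQr]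
      simp only [blockOf_eq_filter P hPc hPu σ, blockOf_eq_filter Q hQc hQu τ, hEq]
    subst hPQ
    have hEq2 : encode P hPc hPu σ = encode P hPc hPu τ := hEq
    have hστ : σ = τ := by
      ext i
      set e := Finset.equivFinOfCardEq hPc with he
      have hb : (e.symm i : Finset (Fin n)) ∈ P := (e.symm i).2
      obtain ⟨x, hx⟩ := Finset.card_pos.mp (lt_of_lt_of_le hr (hPr _ hb))
      have h1 : (⟨blockOf P hPu x, blockOf_mem P hPu x⟩ : {b // b ∈ P}) = e.symm i :=
        Subtype.ext (blockOf_eq P hPu hb hx)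
      have h2 : encode P hPc hPu σ x = σ i := by
        unfold encode
        rw [h1, Equiv.apply_symm_apply]
      have h3 : encode P hPc hPu τ x = τ i := by
        unfold encode
        rw [h1, Equiv.apply_symm_apply]
      rw [← h2, ← h3, hEq2]
    subst hστ
    rfl
  have c1 : Nat.card (↥S × Equiv.Perm (Fin m)) = stirlingGe n m r * Nat.factorial m := by
    rw [Nat.card_prod, Nat.card_coe_set_eq, Nat.card_eq_fintype_card,
      Fintype.card_perm, Fintype.card_fin]
    rfl
  have c2 : Nat.card (Fin n → Fin m) = m ^ n := by
    rw [Nat.card_eq_fintype_card, Fintype.card_fun, Fintype.card_fin, Fintype.card_fin]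
  rw [c1, c2] at key
  exact key

/-- The coloring function used to build explicit partitions. -/
def cfun (N m r : ℕ) (hr : 0 < r) (g : Fin (N - m * r) → Fin m) (x : Fin N) : Fin m :=
  if h : (x : ℕ) < m * r then ⟨(x : ℕ) / r, (Nat.div_lt_iff_lt_mul hr).mpr h⟩
  else g ⟨(x : ℕ) - m * r, by have := x.isLt; omega⟩

lemma cfun_base (N m r : ℕ) (hr : 0 < r) (g : Fin (N - m * r) → Fin m)
    (i : Fin m) (t : ℕ) (ht : t < r) (hlt : (i : ℕ) * r + t < N) :
    cfun N m r hr g ⟨(i : ℕ) * r + t, hlt⟩ = i := by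
  have hlt' : (i : ℕ) * r + t < m * r := by
    have : (i : ℕ) + 1 ≤ m := i.isLt
    calc (i : ℕ) * r + t < (i : ℕ) * r + r := by omega
    _ = ((i : ℕ) + 1) * r := by ring
    _ ≤ m * r := Nat.mul_le_mul_right r this
  unfold cfun
  rw [dif_pos hlt']
  ext
  simp only
  rw [mul_comm, Nat.mul_add_div hr, Nat.div_eq_of_lt ht, add_zero]

lemma lemB (N m r : ℕ) (hm : 0 < m) (hr : 0 < r) (hmr : m * r ≤ N) :
    m ^ (N - m * r) ≤ stirlingGe N m r := by
  classical
  set S : Set (Finset (Finset (Fin N))) := {P : Finset (Finset (Fin N)) |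
    P.card = m ∧ (∀ b ∈ P, r ≤ b.card) ∧ ∀ x : Fin N, ∃! b, b ∈ P ∧ x ∈ b} with hS
  set fib : (Fin (N - m * r) → Fin m) → Fin m → Finset (Fin N) :=
    fun g i => Finset.univ.filter (fun x => cfun N m r hr g x = i) with hfib
  set Pg : (Fin (N - m * r) → Fin m) → Finset (Finset (Fin N)) :=
    fun g => Finset.univ.image (fib g) with hPg
  -- base point of each fiber
  have hbase : ∀ (g : Fin (N - m * r) → Fin m) (i : Fin m) (t : ℕ) (ht : t < r),
      ∀ hlt : (i : ℕ) * r + t < N, (⟨(i : ℕ) * r + t, hlt⟩ : Fin N) ∈ fib g i := by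
    intro g i t ht hlt
    simp only [hfib, Finset.mem_filter, Finset.mem_univ, true_and]
    exact cfun_base N m r hr g i t ht hlt
  have hltN : ∀ (i : Fin m) (t : ℕ), t < r → (i : ℕ) * r + t < N := by
    intro i t ht
    have h1 : (i : ℕ) + 1 ≤ m := i.isLt
    have : ((i : ℕ) + 1) * r ≤ m * r := Nat.mul_le_mul_right r h1
    have : (i : ℕ) * r + r ≤ m * r := by nlinarith
    omega
  -- each fiber determines its color
  have hcolor : ∀ (g g' : Fin (N - m * r) → Fin m) (i i' : Fin m),
      fib g i = fib g' i' → i = i' := by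
    intro g g' i i' hEq
    have h0 : (0 : ℕ) < r := hr
    have hlt := hltN i 0 h0
    have hx : (⟨(i : ℕ) * r + 0, hlt⟩ : Fin N) ∈ fib g i := hbase g i 0 h0 hlt
    rw [hEq] at hx
    simp only [hfib, Finset.mem_filter, Finset.mem_univ, true_and] at hx
    rw [← hx]
    exact (cfun_base N m r hr g' i 0 h0 hlt).symm
  have hmemfib : ∀ (g : Fin (N - m * r) → Fin m) (x : Fin N),
      x ∈ fib g (cfun N m r hr g x) := by
    intro g x
    simp [hfib]
  -- validity
  have hvalid : ∀ g, Pg g ∈ S := by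
    intro g
    have hinj : Function.Injective (fib g) := by
      intro i j hij
      exact hcolor g g i j hij
    refine ⟨?_, ?_, ?_⟩
    · rw [hPg]
      simp only
      rw [Finset.card_image_of_injective _ hinj, Finset.card_univ, Fintype.card_fin]
    · intro b hb
      simp only [hPg, Finset.mem_image, Finset.mem_univ, true_and] at hb
      obtain ⟨i, rfl⟩ := hb
      have : (Finset.univ : Finset (Fin r)).card ≤ (fib g i).card := by
        apply Finset.card_le_card_of_injOn
          (fun t : Fin r => (⟨(i : ℕ) * r + (t : ℕ), hltN i t t.isLt⟩ : Fin N))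
        · intro t _
          exact hbase g i t t.isLt _
        · intro a _ b _ hab
          have : (i : ℕ) * r + (a : ℕ) = (i : ℕ) * r + (b : ℕ) := by
            exact congrArg (fun z : Fin N => (z : ℕ)) hab
          exact Fin.ext (by omega)
      simpa using this
    · intro x
      refine ⟨fib g (cfun N m r hr g x), ⟨?_, hmemfib g x⟩, ?_⟩
      · simp [hPg]
      · rintro b ⟨hb, hxb⟩
        simp only [hPg, Finset.mem_image, Finset.mem_univ, true_and] at hb
        obtain ⟨i, rfl⟩ := hb
        simp only [hfib, Finset.mem_filter, Finset.mem_univ, true_and] at hxb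
        rw [hxb]
  -- injectivity
  have key : Nat.card (Fin (N - m * r) → Fin m) ≤ Nat.card ↥S := by
    apply Nat.card_le_card_of_injective (fun g => (⟨Pg g, hvalid g⟩ : ↥S))
    intro g g' hEq
    have hEq' : Pg g = Pg g' := congrArg Subtype.val hEq
    funext j
    have hjlt : m * r + (j : ℕ) < N := by have := j.isLt; omega
    set x : Fin N := ⟨m * r + (j : ℕ), hjlt⟩ with hx
    have hcx : cfun N m r hr g x = g j := by
      unfold cfun
      rw [dif_neg (by simp [hx])]
      congr 1
      ext
      simp [hx]
    have hcx' : cfun N m r hr g' x = g' j := by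
      unfold cfun
      rw [dif_neg (by simp [hx])]
      congr 1
      ext
      simp [hx]
    have hmem : fib g (g j) ∈ Pg g' := by
      rw [← hEq']
      simp only [hPg, Finset.mem_image, Finset.mem_univ, true_and]
      exact ⟨g j, rfl⟩
    simp only [hPg, Finset.mem_image, Finset.mem_univ, true_and] at hmem
    obtain ⟨i', hi'⟩ := hmem
    have h1 : g j = i' := (hcolor g' g i' (g j) hi').symm
    have hxg : x ∈ fib g (g j) := by rw [← hcx]; exact hmemfib g x
    rw [← hi'] at hxg
    simp only [hfib, Finset.mem_filter, Finset.mem_univ, true_and] at hxg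
    rw [← hcx', hxg, ← h1]
  have c1 : Nat.card (Fin (N - m * r) → Fin m) = m ^ (N - m * r) := by
    rw [Nat.card_eq_fintype_card, Fintype.card_fun, Fintype.card_fin, Fintype.card_fin]
  have c2 : Nat.card ↥S = stirlingGe N m r := by
    rw [Nat.card_coe_set_eq, hS]
    rfl
  rw [c1, c2] at key
  exact key

end StirlingGeAux

theorem stmt_1 (n m r : ℕ) (hn : 0 < n) (hm : 0 < m) (hr : 0 < r)
    (h : m * r + 1 ≤ n) :
    (stirlingGe n m r : ℝ) ≤
      (m : ℝ) ^ (m * r + 1) / (Nat.factorial m : ℝ) * (stirlingGe (n - 1) m r : ℝ) := by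
  have hA := StirlingGeAux.lemA n m r hr
  have hB := StirlingGeAux.lemB (n - 1) m r hm hr (by omega)
  have key : stirlingGe n m r * Nat.factorial m ≤
      m ^ (m * r + 1) * stirlingGe (n - 1) m r := by
    calc stirlingGe n m r * Nat.factorial m ≤ m ^ n := hA
    _ = m ^ (m * r + 1) * m ^ (n - 1 - m * r) := by
        rw [← pow_add]; congr 1; omega
    _ ≤ m ^ (m * r + 1) * stirlingGe (n - 1) m r := Nat.mul_le_mul_left _ hB
  have hfact : (0 : ℝ) < (Nat.factorial m : ℝ) := by
    exact_mod_cast Nat.factorial_pos m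
  rw [div_mul_eq_mul_div, le_div_iff₀ hfact]
  calc (stirlingGe n m r : ℝ) * (Nat.factorial m : ℝ)
      = ((stirlingGe n m r * Nat.factorial m : ℕ) : ℝ) := by push_cast; ring
    _ ≤ ((m ^ (m * r + 1) * stirlingGe (n - 1) m r : ℕ) : ℝ) := by exact_mod_cast key
    _ = (m : ℝ) ^ (m * r + 1) * (stirlingGe (n - 1) m r : ℝ) := by push_cast; ring
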